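/- Range of the angle-to-target function: for r > 0 and a point (x,y) outside the turning circle (i.e., x² + y² > 2ry with y such that the configuration is valid), the continuous branch of κ(θ) = angle from (r sin θ, r(1−cos θ)) to (x,y) attains the value θ_m/2 only at θ = 0 or θ = θ_m, where θ_m = 2·atan2(y,x). -/

import Mathlib

open Real

/-- Two-argument arctangent: the angle of the point `(x, y)` in the plane. -/
noncomputable def atan2 (y x : ℝ) : ℝ := Complex.arg ⟨x, y⟩

/-- Range of the angle-to-target function: for `r > 0` and a point `(x,y)` with
`y > 0` outside the turning circle (`x² + y² > 2ry`), the angle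
`κ(θ) = atan2(y − r(1 − cos θ), x − r sin θ)` attains the value `θ_m/2`
(where `θ_m = 2·atan2(y,x)`) only at `θ = 0` or `θ = θ_m`. -/
theorem kappa_attains_half_thetam (r x y θ : ℝ) (hr : 0 < r) (hy : 0 < y)
    (hout : x ^ 2 + y ^ 2 > 2 * r * y) (h1 : 0 ≤ θ) (h2 : θ < 2 * π)
    (hk : atan2 (y - r * (1 - Real.cos θ)) (x - r * Real.sin θ) = 2 * atan2 y x / 2) :
    θ = 0 ∨ θ = 2 * atan2 y x := by
  have hpi := Real.pi_pos
  set z : ℂ := ⟨x, y⟩ with hzdef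
  set w : ℂ := ⟨x - r * Real.sin θ, y - r * (1 - Real.cos θ)⟩ with hwdef
  have hzre : z.re = x := rfl
  have hzim : z.im = y := rfl
  have hz : z ≠ 0 := by
    intro h
    have : z.im = 0 := by rw [h]; rfl
    rw [hzim] at this; linarith
  have hk' : Complex.arg w = Complex.arg z := by
    have : (2 : ℝ) * atan2 y x / 2 = atan2 y x := by ring
    rw [this] at hk
    exact hk
  have hw : w ≠ 0 := by
    intro h
    rw [h, Complex.arg_zero] at hk'
    have := Complex.arg_eq_zero_iff.mp hk'.symm
    rw [hzim] at this; linarith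
  have habsz : (0:ℝ) < ‖z‖ := norm_pos_iff.mpr hz
  have habsw : (0:ℝ) < ‖w‖ := norm_pos_iff.mpr hw
  -- cross product vanishes
  have e1 : w.im / ‖w‖ = z.im / ‖z‖ := by
    rw [← Complex.sin_arg, ← Complex.sin_arg, hk']
  have e2 : w.re / ‖w‖ = z.re / ‖z‖ := by
    rw [← Complex.cos_arg hw, ← Complex.cos_arg hz, hk']
  have key : (y - r * (1 - Real.cos θ)) * x = (x - r * Real.sin θ) * y := by
    field_simp at e1 e2
    have h3 : (y - r * (1 - Real.cos θ)) * x * ‖z‖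
        = (x - r * Real.sin θ) * y * ‖z‖ := by
      linear_combination x * e1 - y * e2
    exact mul_right_cancel₀ habsz.ne' h3
  have hcr : x * (1 - Real.cos θ) = y * Real.sin θ := by
    have h0 : r * (y * Real.sin θ - x * (1 - Real.cos θ)) = 0 := by linear_combination key
    have := mul_eq_zero.mp h0
    rcases this with h | h
    · linarith
    · linarith
  -- half-angle
  have hs2 : Real.sin θ = 2 * Real.sin (θ/2) * Real.cos (θ/2) := by
    have := Real.sin_two_mul (θ/2)
    rw [show 2 * (θ/2) = θ by ring] at this
    linarith
  have hc2 : 1 - Real.cos θ = 2 * Real.sin (θ/2) ^ 2 := by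
    have h := Real.cos_two_mul (θ/2)
    rw [show 2 * (θ/2) = θ by ring] at h
    have := Real.sin_sq_add_cos_sq (θ/2)
    nlinarith
  have hfact : 2 * Real.sin (θ/2) * (x * Real.sin (θ/2) - y * Real.cos (θ/2)) = 0 := by
    rw [hs2, hc2] at hcr
    ring_nf
    ring_nf at hcr
    linarith
  rcases mul_eq_zero.mp hfact with h | h
  · -- sin (θ/2) = 0, so θ = 0
    left
    have hs0 : Real.sin (θ/2) = 0 := by
      rcases mul_eq_zero.mp h with h' | h'
      · norm_num at h'
      · exact h'
    have hb1 : -π < θ/2 := by linarith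
    have hb2 : θ/2 < π := by linarith
    have := (Real.sin_eq_zero_iff_of_lt_of_lt hb1 hb2).mp hs0
    linarith
  · -- x sin(θ/2) = y cos(θ/2)
    right
    set φ := Complex.arg z with hφ
    have hsφ : Real.sin φ = y / ‖z‖ := by
      rw [hφ, Complex.sin_arg, hzim]
    have hcφ : Real.cos φ = x / ‖z‖ := by
      rw [hφ, Complex.cos_arg hz, hzre]
    -- bounds on φ
    have hφ0 : 0 < φ := by
      rcases lt_or_eq_of_le (Complex.arg_nonneg_iff.mpr (by rw [hzim]; linarith)) with h' | h'
      · exact h'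
      · exfalso
        have := Complex.arg_eq_zero_iff.mp h'.symm
        rw [hzim] at this; linarith
    have hφπ : φ < π := by
      apply Complex.arg_lt_pi_iff.mpr
      right; rw [hzim]; linarith
    -- sin (θ/2) ≠ 0, hence θ > 0
    have hθpos : 0 < θ := by
      rcases lt_or_eq_of_le h1 with h' | h'
      · exact h'
      · exfalso
        rw [← h'] at h
        norm_num at h
        linarith
    have hsin0 : Real.sin (θ/2 - φ) = 0 := by
      rw [Real.sin_sub, hsφ, hcφ]
      field_simp
      linarith [h]
    have hb1 : -π < θ/2 - φ := by linarith
    have hb2 : θ/2 - φ < π := by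
      have : θ/2 < π := by linarith
      linarith
    have := (Real.sin_eq_zero_iff_of_lt_of_lt hb1 hb2).mp hsin0
    have : θ/2 = φ := by linarith
    show θ = 2 * Complex.arg ⟨x, y⟩
    rw [← hzdef, ← hφ]
    linarith
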